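/- Let G be a group with a subgroup U commensurated by G such that G is generated by finitely many left cosets of U, and let κ be a set of subgroups of G such that G = ⟨U ∪ ⋃κ⟩, such that U acts on κ by conjugation with finite orbits, and such that the index of K ∩ U in K is finite for every K ∈ κ. Then there is a finite subset {K_1, …, K_n} of κ that is a union of U-conjugation orbits on κ and satisfies G = ⟨U, K_1, …, K_n⟩. Moreover, for any such subset there exist subgroups L_1, …, L_n of U such that: each L_i is a subgroup of finite index in K_i; each L_i normalises both K_j and L_j for every pair (i,j); and the product L = L_1 L_2 ⋯ L_n is a normal subgroup of U that is commensurated by G. -/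

import Mathlib

open Pointwise

/-- The conjugate of a subgroup by a group element. -/
def conjSub {G : Type*} [Group G] (g : G) (K : Subgroup G) : Subgroup G :=
  K.map (MulAut.conj g).toMonoidHom

/-- A subgroup `K` is commensurated by `G` if each of its conjugates is commensurate with it. -/
def CommensuratedBy {G : Type*} [Group G] (K : Subgroup G) : Prop :=
  ∀ g : G, Subgroup.Commensurable (conjSub g K) K

section Aux

variable {G : Type*} [Group G]

theorem aux_mem_conjSub {g x : G} {K : Subgroup G} : x ∈ conjSub g K ↔ g⁻¹ * x * g ∈ K := by
  constructor
  · rintro ⟨y, hy, rfl⟩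
    simpa [MulAut.conj, mul_assoc] using hy
  · intro h
    exact ⟨g⁻¹ * x * g, h, by simp [MulAut.conj, mul_assoc]⟩

theorem aux_conjSub_eq_smul (g : G) (K : Subgroup G) :
    conjSub g K = ConjAct.toConjAct g • K := by
  ext x
  rw [aux_mem_conjSub, Subgroup.mem_pointwise_smul_iff_inv_smul_mem]
  simp [ConjAct.smul_def, mul_assoc]

theorem aux_conjSub_conjSub (g h : G) (K : Subgroup G) :
    conjSub g (conjSub h K) = conjSub (g * h) K := by
  simp only [aux_conjSub_eq_smul, ← mul_smul, ← map_mul]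

@[simp] theorem aux_conjSub_one (K : Subgroup G) : conjSub 1 K = K := by
  simp [aux_conjSub_eq_smul]

theorem aux_conjSub_inf (g : G) (K K' : Subgroup G) :
    conjSub g (K ⊓ K') = conjSub g K ⊓ conjSub g K' := by
  ext x; simp [aux_mem_conjSub]

theorem aux_conjSub_mono {g : G} {K K' : Subgroup G} (h : K ≤ K') :
    conjSub g K ≤ conjSub g K' := fun x hx => aux_mem_conjSub.2 (h (aux_mem_conjSub.1 hx))

theorem aux_relIndex_conjSub (g : G) (H K : Subgroup G) :
    (conjSub g H).relIndex (conjSub g K) = H.relIndex K := by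
  rw [aux_conjSub_eq_smul, aux_conjSub_eq_smul]
  unfold Subgroup.relIndex Subgroup.index
  exact (Nat.card_congr (Subgroup.quotConjEquiv H K (ConjAct.toConjAct g))).symm

/-- The stabilizer of `K` under conjugation, as a subgroup of `G`. -/
def stabConj (K : Subgroup G) : Subgroup G where
  carrier := {g | conjSub g K = K}
  one_mem' := aux_conjSub_one K
  mul_mem' := by
    intro a b ha hb
    simp only [Set.mem_setOf_eq] at *
    rw [← aux_conjSub_conjSub, hb, ha]
  inv_mem' := by
    intro a ha
    simp only [Set.mem_setOf_eq] at *
    conv_lhs => rw [← ha]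
    rw [aux_conjSub_conjSub, inv_mul_cancel, aux_conjSub_one]

theorem aux_mem_stabConj {g : G} {K : Subgroup G} : g ∈ stabConj K ↔ conjSub g K = K := Iff.rfl

theorem aux_stab_relIndex_ne_zero {U K : Subgroup G}
    (hfin : {K' : Subgroup G | ∃ u ∈ U, K' = conjSub u K}.Finite) :
    (U ⊓ stabConj K).relIndex U ≠ 0 := by
  have hf : Finite (U ⧸ (U ⊓ stabConj K).subgroupOf U) := by
    haveI := hfin.to_subtype
    refine Finite.of_injective
      (fun q => Quotient.liftOn' q
        (fun u => (⟨conjSub (u : G) K, (u : G), u.2, rfl⟩ :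
          {K' : Subgroup G | ∃ u ∈ U, K' = conjSub u K}))
        ?_) ?_
    · intro u v huv
      have h : ((u : G))⁻¹ * (v : G) ∈ U ⊓ stabConj K := by
        have := QuotientGroup.leftRel_apply.1 huv
        have h' := (Subgroup.mem_subgroupOf).1 this
        simpa using h'
      have h2 : conjSub ((u : G)⁻¹ * v) K = K := h.2
      have : conjSub (v : G) K = conjSub (u : G) K := by
        calc conjSub (v : G) K = conjSub ((u : G) * ((u : G)⁻¹ * (v : G))) K := by
              rw [mul_inv_cancel_left]
          _ = conjSub (u : G) (conjSub ((u : G)⁻¹ * (v : G)) K) := (aux_conjSub_conjSub _ _ _).symm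
          _ = conjSub (u : G) K := by rw [h2]
      exact Subtype.ext this.symm
    · intro q1 q2
      induction q1 using Quotient.inductionOn'
      induction q2 using Quotient.inductionOn'
      rename_i u v
      intro h
      have h' : conjSub (u : G) K = conjSub (v : G) K := congrArg Subtype.val h
      apply Quotient.sound'
      rw [QuotientGroup.leftRel_apply]
      have : conjSub ((u : G)⁻¹ * (v : G)) K = K := by
        rw [← aux_conjSub_conjSub, ← h', aux_conjSub_conjSub, inv_mul_cancel, aux_conjSub_one]
      simp [Subgroup.mem_subgroupOf, Subgroup.mem_inf, SetLike.coe_mem, this, aux_mem_stabConj]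
  have : Nat.card (U ⧸ (U ⊓ stabConj K).subgroupOf U) ≠ 0 :=
    Nat.card_ne_zero.2 ⟨inferInstance, hf⟩
  exact this

/-- Product of two subgroups, one normalizing the other. -/
theorem aux_sup_carrier_of_normalizes {A B : Subgroup G} (h : A ≤ Subgroup.normalizer (B : Set G)) :
    ((A ⊔ B : Subgroup G) : Set G) = (A : Set G) * B := by
  have hconj : ∀ a ∈ A, ∀ b ∈ B, a * b * a⁻¹ ∈ B := by
    intro a ha b hb
    exact (Subgroup.mem_normalizer_iff.1 (h ha) b).1 hb
  have hS : ∃ S : Subgroup G, (S : Set G) = (A : Set G) * B := by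
    refine ⟨⟨⟨⟨(A : Set G) * B, ?_⟩, ?_⟩, ?_⟩, rfl⟩
    · rintro x y ⟨a1, ha1, b1, hb1, rfl⟩ ⟨a2, ha2, b2, hb2, rfl⟩
      have hb1' : a2⁻¹ * b1 * (a2⁻¹)⁻¹ ∈ B := hconj a2⁻¹ (inv_mem ha2) b1 hb1
      rw [inv_inv] at hb1'
      exact ⟨a1 * a2, mul_mem ha1 ha2, (a2⁻¹ * b1 * a2) * b2, mul_mem hb1' hb2, by group⟩
    · exact ⟨1, one_mem A, 1, one_mem B, one_mul 1⟩
    · rintro x ⟨a, ha, b, hb, rfl⟩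
      exact ⟨a⁻¹, inv_mem ha, a * b⁻¹ * a⁻¹, hconj a ha b⁻¹ (inv_mem hb), by group⟩
  obtain ⟨S, hSet⟩ := hS
  have h1 : A ⊔ B ≤ S := by
    rw [sup_le_iff]
    constructor
    · intro a ha
      show a ∈ (S : Set G)
      rw [hSet]; exact ⟨a, ha, 1, one_mem B, mul_one a⟩
    · intro b hb
      show b ∈ (S : Set G)
      rw [hSet]; exact ⟨1, one_mem A, b, hb, one_mul b⟩
  have h2 : (S : Set G) ⊆ (A ⊔ B : Subgroup G) := by
    rw [hSet]
    rintro x ⟨a, ha, b, hb, rfl⟩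
    exact mul_mem (Subgroup.mem_sup_left ha) (Subgroup.mem_sup_right hb)
  exact le_antisymm (fun x hx => by rw [← hSet]; exact h1 hx) (fun x hx => h2 (by rwa [hSet]))

theorem aux_conjSub_eq_of_mem_normalizer {x : G} {K : Subgroup G} (hx : x ∈ Subgroup.normalizer (K : Set G)) :
    conjSub x K = K := by
  ext y
  rw [aux_mem_conjSub]
  have hx' := Subgroup.mem_normalizer_iff.1 (inv_mem hx) y
  simpa using hx'.symm

theorem aux_mem_normalizer_of_conjSub_eq {x : G} {K : Subgroup G} (h : conjSub x K = K) :
    x ∈ Subgroup.normalizer (K : Set G) := by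
  rw [Subgroup.mem_normalizer_iff]
  intro y
  constructor
  · intro hy
    have : x * y * x⁻¹ ∈ conjSub x K := aux_mem_conjSub.2 (by simpa [mul_assoc] using hy)
    rwa [h] at this
  · intro hy
    rw [← h] at hy
    simpa [mul_assoc] using aux_mem_conjSub.1 hy

theorem aux_conjSub_iSup {ι : Sort*} (g : G) (s : ι → Subgroup G) :
    conjSub g (⨆ i, s i) = ⨆ i, conjSub g (s i) :=
  Subgroup.map_iSup _ s

theorem aux_iSup_carrier_eq_prod {n : ℕ} (f : Fin n → Subgroup G)
    (h : ∀ i j, f i ≤ Subgroup.normalizer (f j : Set G)) :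
    ((⨆ i, f i : Subgroup G) : Set G) = (List.ofFn fun i => ((f i : Subgroup G) : Set G)).prod := by
  induction n with
  | zero =>
    rw [iSup_of_empty]
    simp only [Subgroup.coe_bot, List.ofFn_zero, List.prod_nil]
    rfl
  | succ n ih =>
    have hsplit : (⨆ i, f i) = f 0 ⊔ ⨆ i : Fin n, f i.succ :=
      le_antisymm
        (iSup_le (Fin.cases le_sup_left fun i =>
          le_sup_of_le_right (le_iSup (fun i : Fin n => f i.succ) i)))
        (sup_le (le_iSup f 0) (iSup_le fun i => le_iSup f i.succ))
    have hnorm : f 0 ≤ Subgroup.normalizer ((⨆ i : Fin n, f i.succ : Subgroup G) : Set G) := by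
      intro x hx
      apply aux_mem_normalizer_of_conjSub_eq
      rw [aux_conjSub_iSup]
      refine iSup_congr fun i => ?_
      exact aux_conjSub_eq_of_mem_normalizer (h 0 i.succ hx)
    rw [hsplit, aux_sup_carrier_of_normalizes hnorm, List.ofFn_succ, List.prod_cons,
      ih (fun i => f i.succ) (fun i j => h i.succ j.succ)]

/-- The heart of the commensuration argument. -/
theorem aux_heart {U N L Ki : Subgroup G} (hNU : N ≤ U) (hLU : L ≤ U) (hLN : L ≤ N)
    (hNrel : N.relIndex U ≠ 0) (hLsle : N ⊓ Ki ≤ L)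
    (hNstabKi : ∀ x ∈ N, conjSub x Ki = Ki)
    (hcommU : ∀ g : G, Subgroup.Commensurable (conjSub g U) U)
    {k : G} (hk : k ∈ Ki) :
    (conjSub k L).relIndex L ≠ 0 := by
  have conjN : (conjSub k N).relIndex U ≠ 0 := by
    have h1 : (conjSub k N).relIndex (conjSub k U) ≠ 0 := by
      rw [aux_relIndex_conjSub]; exact hNrel
    exact Subgroup.relIndex_ne_zero_trans h1 (hcommU k).1
  set T : Subgroup G := N ⊓ conjSub k N with hT
  have hTU : T.relIndex U ≠ 0 := Subgroup.relIndex_inf_ne_zero hNrel conjN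
  set P : Subgroup G := L ⊓ T with hP
  have hPL : P.relIndex L ≠ 0 := by
    have : (T ⊓ L).relIndex L = T.relIndex L := Subgroup.inf_relIndex_right T L
    rw [hP, inf_comm, this]
    intro h0
    exact hTU (Subgroup.relIndex_eq_zero_of_le_right hLU h0)
  set A : Subgroup G := Ki ⊓ U with hA
  have hLA : L.relIndex A ≠ 0 := by
    have hNA : N.relIndex A ≠ 0 := by
      intro h0
      exact hNrel (Subgroup.relIndex_eq_zero_of_le_right inf_le_right h0)
    have hNAi : (N ⊓ A).relIndex A ≠ 0 := by
      rwa [Subgroup.inf_relIndex_right]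
    have hsub : N ⊓ A ≤ L := le_trans (inf_le_inf_left N inf_le_left) hLsle
    intro h0
    exact hNAi (Subgroup.relIndex_eq_zero_of_le_left hsub h0)
  haveI hfinQ : Finite (↥A ⧸ L.subgroupOf A) := by
    have : Nat.card (↥A ⧸ L.subgroupOf A) ≠ 0 := hLA
    exact (Nat.card_ne_zero.1 this).2
  let ψ : (↥A ⧸ L.subgroupOf A) → G ⧸ L := fun q =>
    Quotient.liftOn' q (fun a => QuotientGroup.mk (a : G)) (by
      intro a b hab
      have h1 : (a : G)⁻¹ * (b : G) ∈ L := by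
        have := QuotientGroup.leftRel_apply.1 hab
        exact (Subgroup.mem_subgroupOf).1 this
      exact (QuotientGroup.eq).2 h1)
  let μ : (↥P ⧸ (conjSub k L).subgroupOf P) → G ⧸ L := fun q =>
    Quotient.liftOn' q (fun x => QuotientGroup.mk (k⁻¹ * (x : G) * k)) (by
      intro x y hxy
      have h1 : (x : G)⁻¹ * (y : G) ∈ conjSub k L := by
        have := QuotientGroup.leftRel_apply.1 hxy
        exact (Subgroup.mem_subgroupOf).1 this
      have h2 : k⁻¹ * ((x : G)⁻¹ * (y : G)) * k ∈ L := aux_mem_conjSub.1 h1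
      apply (QuotientGroup.eq).2
      have : (k⁻¹ * (x : G) * k)⁻¹ * (k⁻¹ * (y : G) * k) = k⁻¹ * ((x : G)⁻¹ * (y : G)) * k := by
        group
      rwa [this])
  have hμinj : Function.Injective μ := by
    intro q1 q2
    induction q1 using Quotient.inductionOn'
    induction q2 using Quotient.inductionOn'
    rename_i x y
    intro h
    have h1 : (k⁻¹ * (x : G) * k)⁻¹ * (k⁻¹ * (y : G) * k) ∈ L := (QuotientGroup.eq).1 h
    have h2 : k⁻¹ * ((x : G)⁻¹ * (y : G)) * k ∈ L := by
      have : (k⁻¹ * (x : G) * k)⁻¹ * (k⁻¹ * (y : G) * k) = k⁻¹ * ((x : G)⁻¹ * (y : G)) * k := by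
        group
      rwa [this] at h1
    apply Quotient.sound'
    rw [QuotientGroup.leftRel_apply]
    exact (Subgroup.mem_subgroupOf).2 (aux_mem_conjSub.2 h2)
  have hμrange : Set.range μ ⊆ Set.range ψ := by
    rintro _ ⟨q, rfl⟩
    induction q using Quotient.inductionOn'
    rename_i x
    have hxP : (x : G) ∈ P := x.2
    have hxL : (x : G) ∈ L := hxP.1
    have hxN : (x : G) ∈ N := hLN hxL
    have hxkN : (x : G) ∈ conjSub k N := hxP.2.2
    have hc'Ki : k⁻¹ * (x : G) * k * (x : G)⁻¹ ∈ Ki := by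
      have hxkx : (x : G) * k * (x : G)⁻¹ ∈ Ki := by
        have : (x : G) * k * (x : G)⁻¹ ∈ conjSub (x : G) Ki :=
          aux_mem_conjSub.2 (by simpa [mul_assoc] using hk)
        rwa [hNstabKi _ hxN] at this
      have : k⁻¹ * ((x : G) * k * (x : G)⁻¹) ∈ Ki := mul_mem (inv_mem hk) hxkx
      simpa [mul_assoc] using this
    have hc'U : k⁻¹ * (x : G) * k * (x : G)⁻¹ ∈ U := by
      have h1 : k⁻¹ * (x : G) * k ∈ N := by simpa [mul_assoc] using aux_mem_conjSub.1 hxkN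
      exact mul_mem (hNU h1) (inv_mem (hLU hxL))
    refine ⟨Quotient.mk'' (⟨k⁻¹ * (x : G) * k * (x : G)⁻¹, hc'Ki, hc'U⟩ : ↥A), ?_⟩
    show QuotientGroup.mk (k⁻¹ * (x : G) * k * (x : G)⁻¹) = QuotientGroup.mk (k⁻¹ * (x : G) * k)
    apply (QuotientGroup.eq).2
    have heq : (k⁻¹ * (x : G) * k * (x : G)⁻¹)⁻¹ * (k⁻¹ * (x : G) * k) = (x : G) := by group
    rw [heq]
    exact hxL
  haveI hfinμ : Finite ↥(Set.range μ) :=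
    ((Set.finite_range ψ).subset hμrange).to_subtype
  haveI hfinquot : Finite (↥P ⧸ (conjSub k L).subgroupOf P) :=
    Finite.of_injective (Set.rangeFactorization μ)
      (fun a b h => hμinj (congrArg Subtype.val h))
  have hrel : (conjSub k L).relIndex P ≠ 0 :=
    Nat.card_ne_zero.2 ⟨inferInstance, hfinquot⟩
  exact Subgroup.relIndex_ne_zero_trans hrel hPL

end Aux

theorem aux_part1 {G : Type*} [Group G] (U : Subgroup G) (κ : Set (Subgroup G))
    (hgenκ : Subgroup.closure ((U : Set G) ∪ ⋃ K ∈ κ, (K : Set G)) = ⊤)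
    (F : Finset G) (hF : Subgroup.closure ((F : Set G) * (U : Set G)) = ⊤) :
    ∃ T : Finset ↥κ, U ⊔ (⨆ i ∈ T, (i : ↥κ).1) = ⊤ := by
  classical
  let D : Finset ↥κ → Subgroup G := fun T => U ⊔ ⨆ i ∈ T, (i : ↥κ).1
  have hDmono : ∀ {T T' : Finset ↥κ}, T ⊆ T' → D T ≤ D T' := by
    intro T T' hsub
    exact sup_le_sup_left (biSup_mono hsub) U
  have hDdir : Directed (· ≤ ·) D := fun T1 T2 =>
    ⟨T1 ∪ T2, hDmono Finset.subset_union_left, hDmono Finset.subset_union_right⟩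
  have hDtop : (⨆ T, D T) = ⊤ := by
    rw [eq_top_iff, ← hgenκ, Subgroup.closure_le]
    rintro x (hx | hx)
    · have h1 : x ∈ D ∅ := Subgroup.mem_sup_left hx
      exact le_iSup D ∅ h1
    · rw [Set.mem_iUnion₂] at hx
      obtain ⟨K, hK, hxK⟩ := hx
      have h0 : x ∈ (⟨K, hK⟩ : ↥κ).1 := hxK
      have h1 : (⟨K, hK⟩ : ↥κ).1 ≤ ⨆ i ∈ ({⟨K, hK⟩} : Finset ↥κ), (i : ↥κ).1 :=
        le_iSup₂ (f := fun (i : ↥κ) (_ : i ∈ ({⟨K, hK⟩} : Finset ↥κ)) => (i.1 : Subgroup G)) (⟨K, hK⟩ : ↥κ) (Finset.mem_singleton_self _)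
      have h2 : x ∈ D {⟨K, hK⟩} := Subgroup.mem_sup_right (h1 h0)
      exact le_iSup D {⟨K, hK⟩} h2
  have hFmem : ∀ f ∈ F, ∃ T : Finset ↥κ, f ∈ D T := by
    intro f _
    have : f ∈ (⨆ T, D T) := hDtop.symm ▸ Subgroup.mem_top f
    exact (Subgroup.mem_iSup_of_directed hDdir).1 this
  choose t ht using hFmem
  refine ⟨F.attach.sup (fun f => t f.1 f.2), ?_⟩
  have hFT : ∀ f ∈ F, f ∈ D (F.attach.sup (fun f => t f.1 f.2)) := fun f hf =>
    hDmono (Finset.le_sup (f := fun f : {x // x ∈ F} => t f.1 f.2)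
      (Finset.mem_attach F ⟨f, hf⟩)) (ht f hf)
  rw [eq_top_iff, ← hF, Subgroup.closure_le]
  rintro x ⟨a, ha, u, hu, rfl⟩
  exact mul_mem (hFT a ha) (Subgroup.mem_sup_left hu)

set_option maxHeartbeats 1600000
/-- (Lemma on Hecke pairs.) Given a Hecke pair `(G,U)` with `G` generated by
finitely many cosets of `U`, and a set `κ` of subgroups with `G = ⟨U, κ⟩`, on which `U` acts by
conjugation with finite orbits and each of whose members meets `U` in finite index, there is a
finite union of `U`-orbits `{K_1,…,K_n} ⊆ κ` with `G = ⟨U, K_1,…,K_n⟩`; and for any such subset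
there are finite-index subgroups `L_i ≤ U ∩ K_i` normalising all `K_j, L_j`, whose product
`L = L_1 ⋯ L_n` is a normal subgroup of `U` commensurated by `G`. -/
theorem hecke_pair_boxlem
    (G : Type*) [Group G] (U : Subgroup G) (hcommU : CommensuratedBy U)
    (hgen : ∃ F : Finset G, Subgroup.closure ((F : Set G) * (U : Set G)) = ⊤)
    (κ : Set (Subgroup G))
    (hgenκ : Subgroup.closure ((U : Set G) ∪ ⋃ K ∈ κ, (K : Set G)) = ⊤)
    (hκinv : ∀ u ∈ U, ∀ K ∈ κ, conjSub u K ∈ κ)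
    (hκfin : ∀ K ∈ κ, {K' : Subgroup G | ∃ u ∈ U, K' = conjSub u K}.Finite)
    (hκind : ∀ K ∈ κ, U.relIndex K ≠ 0) :
    (∃ n : ℕ, ∃ Ks : Fin n → Subgroup G, (∀ i, Ks i ∈ κ) ∧
      (∀ i, ∀ u ∈ U, ∃ j, conjSub u (Ks i) = Ks j) ∧
      Subgroup.closure ((U : Set G) ∪ ⋃ i, (Ks i : Set G)) = ⊤) ∧
    (∀ n : ℕ, ∀ Ks : Fin n → Subgroup G, (∀ i, Ks i ∈ κ) →
      (∀ i, ∀ u ∈ U, ∃ j, conjSub u (Ks i) = Ks j) →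
      Subgroup.closure ((U : Set G) ∪ ⋃ i, (Ks i : Set G)) = ⊤ →
      ∃ Ls : Fin n → Subgroup G,
        (∀ i, Ls i ≤ U) ∧
        (∀ i, Ls i ≤ Ks i ∧ (Ls i).relIndex (Ks i) ≠ 0) ∧
        (∀ i j, Ls i ≤ Subgroup.normalizer (Ks j : Set G) ∧ Ls i ≤ Subgroup.normalizer (Ls j : Set G)) ∧
        (∃ L : Subgroup G,
          (L : Set G) = (List.ofFn fun i => ((Ls i : Subgroup G) : Set G)).prod ∧
          L ≤ U ∧ (∀ u ∈ U, ∀ x ∈ L, u * x * u⁻¹ ∈ L) ∧ CommensuratedBy L)) := by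
  constructor
  · -- Part 1
    obtain ⟨F, hF⟩ := hgen
    classical
    obtain ⟨T, hVtop⟩ := aux_part1 U κ hgenκ F hF
    -- the union of the orbits of the members of T
    set O : Set (Subgroup G) :=
      ⋃ (i : ↥κ) (_ : i ∈ T), {K' : Subgroup G | ∃ u ∈ U, K' = conjSub u i.1} with hO
    have hOfin : O.Finite :=
      Set.Finite.biUnion T.finite_toSet (fun i _ => hκfin i.1 i.2)
    set l : List (Subgroup G) := hOfin.toFinset.toList with hl
    have hlO : ∀ K : Subgroup G, K ∈ l ↔ K ∈ O := by
      intro K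
      rw [hl, Finset.mem_toList, Set.Finite.mem_toFinset]
    refine ⟨l.length, fun i => l.get i, ?_, ?_, ?_⟩
    · intro i
      have hmem : l.get i ∈ O := (hlO _).1 (List.get_mem l i)
      rw [hO, Set.mem_iUnion₂] at hmem
      obtain ⟨j, _, u, hu, heq⟩ := hmem
      show l.get i ∈ κ
      rw [heq]
      exact hκinv u hu j.1 j.2
    · intro i u hu
      have hmem : l.get i ∈ O := (hlO _).1 (List.get_mem l i)
      rw [hO, Set.mem_iUnion₂] at hmem
      obtain ⟨j, hj, v, hv, heq⟩ := hmem
      have : conjSub u (l.get i) ∈ O := by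
        rw [hO, Set.mem_iUnion₂]
        exact ⟨j, hj, u * v, mul_mem hu hv, by rw [heq, aux_conjSub_conjSub]⟩
      obtain ⟨idx, hidx⟩ := List.mem_iff_get.1 ((hlO _).2 this)
      exact ⟨idx, hidx.symm⟩
    · rw [eq_top_iff, ← hVtop]
      refine sup_le ?_ ?_
      · exact fun x hx => Subgroup.subset_closure (Or.inl hx)
      · refine iSup₂_le fun j hj => ?_
        have hjO : j.1 ∈ O := by
          rw [hO, Set.mem_iUnion₂]
          exact ⟨j, hj, 1, one_mem U, (aux_conjSub_one j.1).symm⟩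
        obtain ⟨idx, hidx⟩ := List.mem_iff_get.1 ((hlO _).2 hjO)
        intro x hx
        refine Subgroup.subset_closure (Or.inr ?_)
        rw [Set.mem_iUnion]
        refine ⟨idx, ?_⟩
        show x ∈ ((l.get idx : Subgroup G) : Set G)
        rw [hidx]
        exact hx
  · -- Part 2
    intro n Ks hmem hperm hgenKs
    have hstab : ∀ i, (U ⊓ stabConj (Ks i)).relIndex U ≠ 0 := fun i =>
      aux_stab_relIndex_ne_zero (hκfin _ (hmem i))
    set N0 : Subgroup G := U ⊓ ⨅ i, stabConj (Ks i) with hN0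
    have hN0rel : N0.relIndex U ≠ 0 := by
      apply Subgroup.relIndex_inf_ne_zero
      · rw [Subgroup.relIndex_self]; exact one_ne_zero
      · apply Subgroup.relIndex_iInf_ne_zero
        intro i
        intro h0
        exact hstab i (Subgroup.relIndex_eq_zero_of_le_left inf_le_right h0)
    haveI hfiN0 : (N0.subgroupOf U).FiniteIndex := ⟨hN0rel⟩
    set Nu : Subgroup ↥U := (N0.subgroupOf U).normalCore with hNu
    set N : Subgroup G := Nu.map U.subtype with hN
    have hNU : N ≤ U := Subgroup.map_subtype_le Nu
    have hNrel : N.relIndex U ≠ 0 := by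
      have he : N.subgroupOf U = Nu :=
        Subgroup.comap_map_eq_self_of_injective U.subtype_injective Nu
      show (N.subgroupOf U).index ≠ 0
      rw [he]
      exact Subgroup.FiniteIndex.index_ne_zero
    have hNstab : ∀ x ∈ N, ∀ i, conjSub x (Ks i) = Ks i := by
      rintro x ⟨y, hy, rfl⟩ i
      have h1 : (y : G) ∈ N0 := (Subgroup.mem_subgroupOf).1 (Subgroup.normalCore_le _ hy)
      exact aux_mem_stabConj.1 ((Subgroup.mem_iInf).1 h1.2 i)
    have hNnorm : ∀ u ∈ U, ∀ x ∈ N, u * x * u⁻¹ ∈ N := by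
      rintro u hu x ⟨y, hy, rfl⟩
      have h1 : (⟨u, hu⟩ : ↥U) * y * (⟨u, hu⟩ : ↥U)⁻¹ ∈ Nu :=
        (Subgroup.normalCore_normal _).conj_mem y hy ⟨u, hu⟩
      exact ⟨_, h1, rfl⟩
    have hNconj : ∀ u ∈ U, conjSub u N = N := by
      intro u hu
      apply le_antisymm
      · intro z hz
        have h1 : u⁻¹ * z * u ∈ N := aux_mem_conjSub.1 hz
        have := hNnorm u hu _ h1
        simpa [mul_assoc] using this
      · intro x hx
        refine aux_mem_conjSub.2 ?_
        have := hNnorm u⁻¹ (inv_mem hu) x hx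
        simpa [mul_assoc] using this
    refine ⟨fun i => N ⊓ Ks i, fun i => le_trans inf_le_left hNU, fun i => ⟨inf_le_right, ?_⟩,
      fun i j => ⟨?_, ?_⟩, ?_⟩
    · rw [Subgroup.inf_relIndex_right]
      exact Subgroup.relIndex_ne_zero_trans hNrel (hκind _ (hmem i))
    · exact fun x hx => aux_mem_normalizer_of_conjSub_eq (hNstab x hx.1 j)
    · intro x hx
      apply aux_mem_normalizer_of_conjSub_eq
      rw [aux_conjSub_inf, hNconj x (hNU hx.1), hNstab x hx.1 j]
    · -- the product subgroup L
      set Ls : Fin n → Subgroup G := fun i => N ⊓ Ks i with hLs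
      set L : Subgroup G := ⨆ i, Ls i with hL
      have hLnorm : ∀ i j, Ls i ≤ Subgroup.normalizer (Ls j : Set G) := by
        intro i j x hx
        apply aux_mem_normalizer_of_conjSub_eq
        rw [hLs]
        rw [aux_conjSub_inf, hNconj x (hNU hx.1), hNstab x hx.1 j]
      have hLU : L ≤ U := iSup_le fun i => le_trans inf_le_left hNU
      have hLN : L ≤ N := iSup_le fun i => inf_le_left
      have hLle : ∀ u ∈ U, conjSub u L ≤ L := by
        intro u hu
        rw [hL, aux_conjSub_iSup]
        refine iSup_le fun i => ?_
        obtain ⟨j, hj⟩ := hperm i u hu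
        have : conjSub u (Ls i) = Ls j := by
          rw [hLs]
          rw [aux_conjSub_inf, hNconj u hu, hj]
        rw [this]
        exact le_iSup Ls j
      have hLconj : ∀ u ∈ U, conjSub u L = L := by
        intro u hu
        refine le_antisymm (hLle u hu) ?_
        have h2 := hLle u⁻¹ (inv_mem hu)
        have h3 : L = conjSub u (conjSub u⁻¹ L) := by
          rw [aux_conjSub_conjSub, mul_inv_cancel, aux_conjSub_one]
        exact h3.trans_le (aux_conjSub_mono h2)
      refine ⟨L, ?_, hLU, ?_, ?_⟩
      · exact aux_iSup_carrier_eq_prod Ls hLnorm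
      · intro u hu x hx
        rw [← hLconj u hu]
        refine aux_mem_conjSub.2 ?_
        simpa [mul_assoc] using hx
      · -- CommensuratedBy L
        have hmemcomm : ∀ g : G, g ∈ Subgroup.Commensurable.commensurator L := by
          have hle : Subgroup.closure ((U : Set G) ∪ ⋃ i, (Ks i : Set G)) ≤
              Subgroup.Commensurable.commensurator L := by
            rw [Subgroup.closure_le]
            rintro x (hx | hx)
            · rw [SetLike.mem_coe, Subgroup.Commensurable.commensurator_mem_iff, ← aux_conjSub_eq_smul,
                hLconj x hx]
            · rw [Set.mem_iUnion] at hx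
              obtain ⟨i, hxi⟩ := hx
              rw [SetLike.mem_coe, Subgroup.Commensurable.commensurator_mem_iff, ← aux_conjSub_eq_smul]
              have key1 : (conjSub x L).relIndex L ≠ 0 :=
                aux_heart hNU hLU hLN hNrel (le_iSup Ls i) (fun y hy => hNstab y hy i) hcommU hxi
              have key2 : L.relIndex (conjSub x L) ≠ 0 := by
                have h2 : (conjSub x⁻¹ L).relIndex L ≠ 0 :=
                  aux_heart hNU hLU hLN hNrel (le_iSup Ls i) (fun y hy => hNstab y hy i) hcommU
                    (inv_mem hxi)
                have h3 : (conjSub x⁻¹ L).relIndex (conjSub x⁻¹ (conjSub x L)) =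
                    L.relIndex (conjSub x L) := aux_relIndex_conjSub x⁻¹ L (conjSub x L)
                rw [aux_conjSub_conjSub, inv_mul_cancel, aux_conjSub_one] at h3
                rw [← h3]
                exact h2
              exact ⟨key1, key2⟩
          intro g
          exact hle (hgenKs ▸ Subgroup.mem_top g)
        intro g
        have := (Subgroup.Commensurable.commensurator_mem_iff L g).1 (hmemcomm g)
        rwa [← aux_conjSub_eq_smul] at this
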